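/- arXiv:math/0311529 — 4 statements merged into one kernel-verified Lean document; each statement's English description precedes it below -/
import Mathlib

section
/- Let A be an associative algebra over ℂ with local left units: for every finite subset M ⊆ A there exists e ∈ A with e·a = a for all a ∈ M. Then A is H-unital, i.e., the bar complex B_•(A) with differential β = Σᵢ₌₀ⁿ⁻¹ (−1)ⁱ dᵢ on A^{⊗(n+1)} is acyclic. -/
/- STATEMENT 1: An associative ℂ-algebra with local left units is H-unital,
i.e. its bar complex is acyclic. -/

open scoped TensorProduct
open PiTensorProduct

/-- `n`-chains: the `(n+1)`-fold tensor power of `A`. -/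
abbrev HChains (A : Type*) [AddCommGroup A] [Module ℂ A] (n : ℕ) : Type _ :=
  ⨂[ℂ] _ : Fin (n + 1), A

/-- The `i`-th face `dᵢ(a₀⊗⋯⊗aₙ₊₁) = a₀⊗⋯⊗aᵢaᵢ₊₁⊗⋯⊗aₙ₊₁` on tuples. -/
def dFace {A : Type*} [Mul A] {n : ℕ} (i : ℕ) (a : Fin (n + 2) → A) : Fin (n + 1) → A :=
  fun j => if (j : ℕ) < i then a (Fin.castSucc j)
    else if (j : ℕ) = i then a (Fin.castSucc j) * a j.succ
    else a j.succ

/-- The family `β` is the bar differential: `β = Σᵢ₌₀ⁿ (−1)ⁱ dᵢ` (no cyclic face). -/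
def IsBarDifferential {A : Type*} [NonUnitalRing A] [Module ℂ A]
    (β : ∀ n, HChains A (n + 1) →ₗ[ℂ] HChains A n) : Prop :=
  ∀ (n : ℕ) (a : Fin (n + 2) → A),
    β n (tprod ℂ a) =
      ∑ i ∈ Finset.range (n + 1), ((-1 : ℂ) ^ i) • tprod ℂ (dFace i a)

set_option linter.unusedSectionVars false

section Aux

variable {A : Type*} [NonUnitalRing A] [Module ℂ A] [IsScalarTower ℂ A A] [SMulCommClass ℂ A A]

/-- Multiply the first tensor factor on the left by `e`. -/
noncomputable def mulFirst (e : A) (n : ℕ) : HChains A n →ₗ[ℂ] HChains A n :=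
  PiTensorProduct.map (Fin.cases (LinearMap.mulLeft ℂ e) fun _ => LinearMap.id)

lemma mulFirst_tprod (e : A) (n : ℕ) (a : Fin (n+1) → A) :
    mulFirst e n (tprod ℂ a) = PiTensorProduct.tprod ℂ (Fin.cons (e * a 0) (fun k => a k.succ)) := by
  rw [mulFirst, PiTensorProduct.map_tprod]
  congr 1
  funext i
  induction i using Fin.cases <;> simp

/-- The homotopy `x ↦ e ⊗ x`. -/
noncomputable def consMap (e : A) (n : ℕ) : HChains A n →ₗ[ℂ] HChains A (n+1) :=
  PiTensorProduct.lift
    { toFun := fun a => tprod ℂ (Fin.cons e a)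
      map_update_add' := by
        intro inst a i x y
        cases Subsingleton.elim inst (instDecidableEqFin _)
        simp [Fin.cons_update]
      map_update_smul' := by
        intro inst a i c x
        cases Subsingleton.elim inst (instDecidableEqFin _)
        simp [Fin.cons_update] }

@[simp] lemma consMap_tprod (e : A) (n : ℕ) (a : Fin (n+1) → A) :
    consMap e n (tprod ℂ a) = PiTensorProduct.tprod ℂ (Fin.cons e a) := by
  simp [consMap]

lemma dFace_zero_cons (e : A) {n : ℕ} (a : Fin (n+1) → A) :
    dFace 0 (Fin.cons e a) = Fin.cons (e * a 0) (fun k => a k.succ) := by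
  funext j
  induction j using Fin.cases with
  | zero => simp [dFace]
  | succ k => simp [dFace, Fin.succ_castSucc]

lemma dFace_succ_cons (e : A) {n : ℕ} (i : ℕ) (a : Fin (n+2) → A) :
    dFace (i+1) (Fin.cons e a) = Fin.cons e (dFace i a) := by
  funext j
  induction j using Fin.cases with
  | zero => simp [dFace]
  | succ k =>
    simp only [dFace, Fin.cons_succ, Fin.val_succ]
    rcases lt_trichotomy (k : ℕ) i with h | h | h
    · rw [if_pos (by omega), if_pos h, ← Fin.succ_castSucc, Fin.cons_succ]
    · rw [if_neg (by omega), if_pos (by omega), if_neg (by omega), if_pos h,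
        ← Fin.succ_castSucc, Fin.cons_succ]
    · rw [if_neg (by omega), if_neg (by omega), if_neg (by omega), if_neg (by omega)]

lemma beta_consMap {β : ∀ n, HChains A (n + 1) →ₗ[ℂ] HChains A n}
    (hβ : IsBarDifferential β) (e : A) (n : ℕ) (x : HChains A (n+1)) :
    β (n+1) (consMap e (n+1) x) = mulFirst e (n+1) x - consMap e n (β n x) := by
  induction x using PiTensorProduct.induction_on with
  | smul_tprod r a =>
    rw [map_smul, map_smul, map_smul, map_smul, consMap_tprod, map_smul, ← smul_sub]
    congr 1
    rw [hβ, hβ, Finset.sum_range_succ', map_sum]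
    simp only [dFace_succ_cons, dFace_zero_cons, pow_succ, pow_zero, one_smul,
      map_smul, consMap_tprod, mulFirst_tprod, mul_neg_one, neg_smul,
      Finset.sum_neg_distrib]
    rw [neg_add_eq_sub]
  | add x y hx hy =>
    simp only [map_add, hx, hy]
    abel

lemma beta_consMap_zero {β : ∀ n, HChains A (n + 1) →ₗ[ℂ] HChains A n}
    (hβ : IsBarDifferential β) (e : A) (x : HChains A 0) :
    β 0 (consMap e 0 x) = mulFirst e 0 x := by
  induction x using PiTensorProduct.induction_on with
  | smul_tprod r a =>
    rw [map_smul, map_smul, map_smul, consMap_tprod, hβ, Finset.sum_range_one,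
      pow_zero, one_smul, dFace_zero_cons, mulFirst_tprod]
  | add x y hx hy => simp only [map_add, hx, hy]

lemma exists_good_finset (n : ℕ) (x : HChains A n) :
    ∃ s : Finset A, ∀ e : A, (∀ a ∈ s, e * a = a) → mulFirst e n x = x := by
  induction x using PiTensorProduct.induction_on with
  | smul_tprod r a =>
    refine ⟨{a 0}, fun e he => ?_⟩
    rw [map_smul, mulFirst_tprod]
    congr 2
    funext j
    induction j using Fin.cases with
    | zero => simpa using he (a 0) (Finset.mem_singleton_self _)
    | succ k => simp
  | add x y hx hy =>
    classical
    obtain ⟨s, hs⟩ := hx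
    obtain ⟨t, ht⟩ := hy
    refine ⟨s ∪ t, fun e he => ?_⟩
    rw [map_add, hs e (fun a ha => he a (Finset.mem_union_left _ ha)),
      ht e (fun a ha => he a (Finset.mem_union_right _ ha))]

end Aux

theorem hUnital_of_local_left_units
    {A : Type*} [NonUnitalRing A] [Module ℂ A] [IsScalarTower ℂ A A] [SMulCommClass ℂ A A]
    -- local left units: every finite subset M has a local left unit e
    (hloc : ∀ M : Finset A, ∃ e : A, ∀ a ∈ M, e * a = a)
    (β : ∀ n, HChains A (n + 1) →ₗ[ℂ] HChains A n) (hβ : IsBarDifferential β) :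
    -- the bar complex is acyclic: exactness at A …
    (∀ c : HChains A 0, ∃ b : HChains A 1, β 0 b = c) ∧
    -- … and in every higher degree every β-cycle is a β-boundary
    (∀ (n : ℕ) (c : HChains A (n + 1)), β n c = 0 → ∃ b : HChains A (n + 2), β (n + 1) b = c) := by
  constructor
  · intro c
    obtain ⟨s, hs⟩ := exists_good_finset 0 c
    obtain ⟨e, he⟩ := hloc s
    exact ⟨consMap e 0 c, by rw [beta_consMap_zero hβ, hs e he]⟩
  · intro n c hc
    obtain ⟨s, hs⟩ := exists_good_finset (n+1) c
    obtain ⟨e, he⟩ := hloc s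
    refine ⟨consMap e (n+1) c, ?_⟩
    rw [beta_consMap hβ, hc, map_zero, sub_zero, hs e he]
end

section
/- Let 𝔅 be a unital Banach algebra, h ∈ 𝔅, and for t ∈ ℝ define the bounded chain map α_t on the bounded Hochschild complex by α_t(a₀ ⊗̂ ⋯ ⊗̂ aₙ) = e^{th}a₀e^{−th} ⊗̂ ⋯ ⊗̂ e^{th}aₙe^{−th}. Then for every chain τ, t ↦ α_t(τ) is differentiable with d/dt α_t(τ) = α_t(Γ_h(τ)), where Γ_h(a₀⊗⋯⊗aₙ) = Σᵢ a₀⊗⋯⊗[h,aᵢ]⊗⋯⊗aₙ. -/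
/- STATEMENT 4: For a unital Banach algebra 𝔅 and h ∈ 𝔅, the conjugation chain maps
α_t(a₀ ⊗̂ ⋯ ⊗̂ aₙ) = e^{th}a₀e^{−th} ⊗̂ ⋯ ⊗̂ e^{th}aₙe^{−th} on the bounded Hochschild
complex satisfy d/dt α_t(τ) = α_t(Γ_h(τ)) for every chain τ.
The spaces of bounded n-chains 𝔅^{⊗̂(n+1)} (projective tensor powers) are formalized as
Banach spaces C n together with the canonical bounded multilinear maps tp n (elementary
tensors) whose span is dense and which determine the bounded operators α, Γ. -/

open Filter NormedSpace

private lemma conj_hasDerivAt' {B : Type*} [NormedRing B] [NormedAlgebra ℂ B] [CompleteSpace B]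
    (h a : B) (t : ℝ) :
    HasDerivAt (fun u : ℝ => exp (u • h) * a * exp (-(u • h)))
      (h * (exp (t • h) * a * exp (-(t • h)))
        - (exp (t • h) * a * exp (-(t • h))) * h) t := by
  have e1 : HasDerivAt (fun u : ℝ => exp (u • h)) (h * exp (t • h)) t := by
    simpa only using hasDerivAt_exp_smul_const' (𝕂 := ℝ) h t
  have e2 : HasDerivAt (fun u : ℝ => exp (-(u • h))) ((-h) * exp (-(t • h))) t := by
    simpa only [smul_neg] using hasDerivAt_exp_smul_const' (𝕂 := ℝ) (-h) t
  have hc : (-h) * exp (-(t • h)) = exp (-(t • h)) * (-h) :=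
    (((Commute.refl h).smul_right t).neg_right.neg_left.exp_right).eq
  have := (e1.mul_const a).mul e2
  convert this using 1
  · rfl
  rw [hc]
  noncomm_ring

private lemma tensor_hasDerivAt' {B : Type*} [NormedRing B] [NormedAlgebra ℂ B] [CompleteSpace B]
    (h : B) {n : ℕ} {Cn : Type*} [NormedAddCommGroup Cn] [NormedSpace ℂ Cn]
    (tp : ContinuousMultilinearMap ℂ (fun _ : Fin (n + 1) => B) Cn)
    (a : Fin (n + 1) → B) (t : ℝ) :
    HasDerivAt (fun u : ℝ => tp (fun i => exp (u • h) * a i * exp (-(u • h))))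
      (∑ i : Fin (n + 1),
        tp (Function.update (fun j => exp (t • h) * a j * exp (-(t • h))) i
          (h * (exp (t • h) * a i * exp (-(t • h)))
            - (exp (t • h) * a i * exp (-(t • h))) * h))) t := by
  classical
  set g : Fin (n + 1) → ℝ → B := fun i u => exp (u • h) * a i * exp (-(u • h)) with hg_def
  set d : Fin (n + 1) → B := fun i => h * g i t - g i t * h with hd_def
  have hg : ∀ i, HasFDerivAt (g i) ((1 : ℝ →L[ℝ] ℝ).smulRight (d i)) t := fun i =>
    hasDerivAt_iff_hasFDerivAt.1 (conj_hasDerivAt' h (a i) t)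
  have H := HasFDerivAt.multilinear_comp (tp.restrictScalars ℝ) hg
  have H2 := H.hasDerivAt
  convert H2 using 1
  · rfl
  simp only [ContinuousLinearMap.coe_sum', Finset.sum_apply, ContinuousLinearMap.coe_comp',
    Function.comp_apply, ContinuousLinearMap.smulRight_apply, ContinuousLinearMap.one_apply,
    one_smul, ContinuousMultilinearMap.toContinuousLinearMap_apply,
    ContinuousMultilinearMap.coe_restrictScalars]
  rfl

open Filter NormedSpace


theorem deriv_of_conjugation_chain_map
    {B : Type*} [NormedRing B] [NormedAlgebra ℂ B] [CompleteSpace B] (h : B)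
    -- the bounded Hochschild chain spaces 𝔅^{⊗̂(n+1)}
    (C : ℕ → Type*) [∀ n, NormedAddCommGroup (C n)] [∀ n, NormedSpace ℂ (C n)]
    [∀ n, CompleteSpace (C n)]
    -- elementary tensors, spanning a dense subspace
    (tp : ∀ n, ContinuousMultilinearMap ℂ (fun _ : Fin (n + 1) => B) (C n))
    (hdense : ∀ n, Dense (Submodule.span ℂ (Set.range (tp n)) : Set (C n)))
    -- α_t conjugates each tensor factor by e^{th}
    (α : ℝ → ∀ n, C n →L[ℂ] C n)
    (hα : ∀ (t : ℝ) (n : ℕ) (a : Fin (n + 1) → B),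
      α t n (tp n a) =
        tp n (fun i => NormedSpace.exp (t • h) * a i * NormedSpace.exp (-(t • h))))
    -- the norms ‖α_t‖ are locally uniformly bounded
    (hbound : ∀ r : ℝ, ∃ M : ℝ, ∀ t : ℝ, |t| ≤ r → ∀ n, ‖α t n‖ ≤ M)
    -- Γ_h(a₀⊗⋯⊗aₙ) = Σᵢ a₀⊗⋯⊗[h,aᵢ]⊗⋯⊗aₙ
    (Γ : ∀ n, C n →L[ℂ] C n)
    (hΓ : ∀ (n : ℕ) (a : Fin (n + 1) → B),
      Γ n (tp n a) =
        ∑ i : Fin (n + 1), tp n (Function.update a i (h * a i - a i * h))) :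
    ∀ (n : ℕ) (τ : C n) (t : ℝ),
      HasDerivAt (fun u : ℝ => α u n τ) (α t n (Γ n τ)) t := by
  intro n
  -- Step 1: derivative formula on elementary tensors
  have step1 : ∀ (a : Fin (n + 1) → B) (t : ℝ),
      HasDerivAt (fun u : ℝ => α u n (tp n a)) (α t n (Γ n (tp n a))) t := by
    intro a t
    have key := tensor_hasDerivAt' h (tp n) a t
    have e1 : (fun u : ℝ => α u n (tp n a))
        = fun u : ℝ => tp n (fun i => exp (u • h) * a i * exp (-(u • h))) := by
      funext u; exact hα u n a
    have hval : α t n (Γ n (tp n a)) = ∑ i : Fin (n + 1),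
        tp n (Function.update (fun j => exp (t • h) * a j * exp (-(t • h))) i
          (h * (exp (t • h) * a i * exp (-(t • h)))
            - (exp (t • h) * a i * exp (-(t • h))) * h)) := by
      rw [hΓ, map_sum]
      refine Finset.sum_congr rfl fun i _ => ?_
      rw [hα]
      congr 1
      funext j
      rcases eq_or_ne j i with rfl | hj
      · simp only [Function.update_self]
        have hc1 : exp (t • h) * h = h * exp (t • h) :=
          (((Commute.refl h).smul_right t).exp_right).eq.symm
        have hc2 : h * exp (-(t • h)) = exp (-(t • h)) * h :=
          (((Commute.refl h).smul_right t).neg_right.exp_right).eq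
        simp only [mul_sub, sub_mul, ← mul_assoc]
        rw [hc1, mul_assoc (exp (t • h) * a j) h, hc2, ← mul_assoc]
      · simp only [Function.update_of_ne hj]
    rw [e1, hval]
    exact key
  -- Step 2: derivative formula on the span
  have spanP : ∀ σ ∈ Submodule.span ℂ (Set.range (tp n)),
      ∀ t : ℝ, HasDerivAt (fun u : ℝ => α u n σ) (α t n (Γ n σ)) t := by
    intro σ hσ
    induction hσ using Submodule.span_induction with
    | mem x hx =>
      obtain ⟨a, rfl⟩ := hx
      exact step1 a
    | zero =>
      intro t
      simp only [map_zero]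
      exact hasDerivAt_const t 0
    | add x y hx hy ihx ihy =>
      intro t
      simpa only [map_add, Pi.add_def] using (ihx t).add (ihy t)
    | smul c x hx ih =>
      intro t
      simpa only [map_smul, Pi.smul_def] using (ih t).const_smul c
  -- Step 3: continuity of t ↦ α t n τ for every τ
  have cont : ∀ τ : C n, Continuous fun u : ℝ => α u n τ := by
    intro τ
    rw [Metric.continuous_iff]
    intro t₀ ε hε
    obtain ⟨M, hM⟩ := hbound (|t₀| + 1)
    have hM0 : 0 ≤ M :=
      le_trans (norm_nonneg _) (hM t₀ (by linarith [abs_nonneg t₀]) n)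
    obtain ⟨σ, hσs, hσ⟩ := (hdense n).exists_dist_lt τ
      (show 0 < ε / 3 / (M + 1) by positivity)
    have hcσ : Continuous fun u : ℝ => α u n σ :=
      continuous_iff_continuousAt.2 fun s => (spanP σ hσs s).continuousAt
    obtain ⟨δ, hδ0, hδ⟩ := Metric.continuous_iff.1 hcσ t₀ (ε / 3) (by positivity)
    refine ⟨min δ 1, by positivity, fun u hu => ?_⟩
    have hu1 : |u - t₀| < 1 := lt_of_lt_of_le (by simpa [Real.dist_eq] using hu) (min_le_right _ _)
    have huδ : dist u t₀ < δ := lt_of_lt_of_le hu (min_le_left _ _)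
    have hub : |u| ≤ |t₀| + 1 := by
      have := abs_sub_abs_le_abs_sub u t₀
      linarith
    have hb1 : ∀ v : ℝ, |v| ≤ |t₀| + 1 → dist (α v n τ) (α v n σ) ≤ M * dist τ σ := by
      intro v hv
      rw [dist_eq_norm, dist_eq_norm, ← map_sub]
      calc ‖α v n (τ - σ)‖ ≤ ‖α v n‖ * ‖τ - σ‖ := (α v n).le_opNorm _
        _ ≤ M * ‖τ - σ‖ := by
            exact mul_le_mul_of_nonneg_right (hM v hv n) (norm_nonneg _)
    have hsmall : M * dist τ σ < ε / 3 := by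
      have : M * dist τ σ ≤ M * (ε / 3 / (M + 1)) :=
        mul_le_mul_of_nonneg_left hσ.le hM0
      have h2 : M * (ε / 3 / (M + 1)) < ε / 3 := by
        have hlt : M / (M + 1) < 1 := by
          rw [div_lt_one (by positivity)]; linarith
        calc M * (ε / 3 / (M + 1)) = (M / (M + 1)) * (ε / 3) := by ring
          _ < 1 * (ε / 3) := mul_lt_mul_of_pos_right hlt (by positivity)
          _ = ε / 3 := one_mul _
      linarith
    calc dist (α u n τ) (α t₀ n τ)
        ≤ dist (α u n τ) (α u n σ) + dist (α u n σ) (α t₀ n σ) + dist (α t₀ n σ) (α t₀ n τ) :=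
          dist_triangle4 _ _ _ _
      _ < ε / 3 + ε / 3 + ε / 3 := by
          have b1 := lt_of_le_of_lt (hb1 u hub) hsmall
          have b3 : dist (α t₀ n σ) (α t₀ n τ) < ε / 3 := by
            rw [dist_comm]; exact lt_of_le_of_lt (hb1 t₀ (by linarith [abs_nonneg t₀])) hsmall
          have b2 := hδ u huδ
          linarith
      _ = ε := by ring
  -- α 0 is the identity
  have hα0 : ∀ τ : C n, α 0 n τ = τ := by
    have heq : Set.EqOn (α 0 n) id (Submodule.span ℂ (Set.range (tp n)) : Set (C n)) := by
      intro σ hσ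
      induction hσ using Submodule.span_induction with
      | mem x hx =>
        obtain ⟨a, rfl⟩ := hx
        simpa using hα 0 n a
      | zero => simp
      | add x y hx hy ihx ihy => simp only [map_add, id_eq] at *; rw [ihx, ihy]
      | smul c x hx ih => simp only [map_smul, id_eq] at *; rw [ih]
    intro τ
    exact congrFun (Continuous.ext_on (hdense n) (α 0 n).continuous continuous_id heq) τ
  have contΓ : ∀ τ : C n, Continuous fun s : ℝ => α s n (Γ n τ) := fun τ => cont (Γ n τ)
  -- Step 4: integral identity
  have intid : ∀ (t : ℝ) (τ : C n),
      α t n τ = τ + ∫ s in (0:ℝ)..t, α s n (Γ n τ) := by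
    intro t
    have hspan : Set.EqOn (fun τ : C n => α t n τ)
        (fun τ : C n => τ + ∫ s in (0:ℝ)..t, α s n (Γ n τ))
        (Submodule.span ℂ (Set.range (tp n)) : Set (C n)) := by
      intro σ hσ
      have hFTC := intervalIntegral.integral_eq_sub_of_hasDerivAt
        (f := fun u : ℝ => α u n σ) (f' := fun u : ℝ => α u n (Γ n σ))
        (fun s _ => spanP σ hσ s) ((contΓ σ).intervalIntegrable 0 t)
      simp only
      rw [hFTC]
      simp only [hα0]
      abel
    have habs : ∀ s ∈ Set.uIoc (0:ℝ) t, |s| ≤ |t| := by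
      intro s hs
      rw [Set.mem_uIoc] at hs
      rcases hs with ⟨h1, h2⟩ | ⟨h1, h2⟩ <;> rw [abs_le] <;>
        constructor <;> nlinarith [le_abs_self t, neg_abs_le t]
    obtain ⟨M, hM⟩ := hbound |t|
    have hM0 : 0 ≤ M := le_trans (norm_nonneg _) (hM t le_rfl n)
    have contR : Continuous fun τ : C n => τ + ∫ s in (0:ℝ)..t, α s n (Γ n τ) := by
      have hlip : LipschitzWith (Real.toNNReal (1 + M * ‖Γ n‖ * |t|))
          (fun τ : C n => τ + ∫ s in (0:ℝ)..t, α s n (Γ n τ)) := by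
        refine LipschitzWith.of_dist_le_mul fun x y => ?_
        rw [Real.coe_toNNReal _ (by positivity)]
        have hint : (∫ s in (0:ℝ)..t, α s n (Γ n x)) - ∫ s in (0:ℝ)..t, α s n (Γ n y)
            = ∫ s in (0:ℝ)..t, α s n (Γ n (x - y)) := by
          rw [← intervalIntegral.integral_sub ((contΓ x).intervalIntegrable 0 t)
            ((contΓ y).intervalIntegrable 0 t)]
          simp [map_sub]
        have hIbound : ‖∫ s in (0:ℝ)..t, α s n (Γ n (x - y))‖
            ≤ M * ‖Γ n‖ * ‖x - y‖ * |t| := by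
          have := intervalIntegral.norm_integral_le_of_norm_le_const
            (C := M * (‖Γ n‖ * ‖x - y‖)) (f := fun s => α s n (Γ n (x - y)))
            (a := (0:ℝ)) (b := t) ?_
          · calc ‖∫ s in (0:ℝ)..t, α s n (Γ n (x - y))‖
                ≤ M * (‖Γ n‖ * ‖x - y‖) * |t - 0| := this
              _ = M * ‖Γ n‖ * ‖x - y‖ * |t| := by rw [sub_zero]; ring
          · intro s hs
            calc ‖α s n (Γ n (x - y))‖ ≤ ‖α s n‖ * ‖Γ n (x - y)‖ := (α s n).le_opNorm _
              _ ≤ M * (‖Γ n‖ * ‖x - y‖) := by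
                  refine mul_le_mul (hM s (habs s hs) n) ((Γ n).le_opNorm _)
                    (norm_nonneg _) hM0
        rw [dist_eq_norm, dist_eq_norm]
        calc ‖(x + ∫ s in (0:ℝ)..t, α s n (Γ n x)) - (y + ∫ s in (0:ℝ)..t, α s n (Γ n y))‖
            = ‖(x - y) + ((∫ s in (0:ℝ)..t, α s n (Γ n x)) - ∫ s in (0:ℝ)..t, α s n (Γ n y))‖ := by
              congr 1
              abel
          _ ≤ ‖x - y‖ + ‖(∫ s in (0:ℝ)..t, α s n (Γ n x)) - ∫ s in (0:ℝ)..t, α s n (Γ n y)‖ :=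
              norm_add_le _ _
          _ ≤ ‖x - y‖ + M * ‖Γ n‖ * ‖x - y‖ * |t| := by rw [hint]; linarith [hIbound]
          _ = (1 + M * ‖Γ n‖ * |t|) * ‖x - y‖ := by ring
      exact hlip.continuous
    intro τ
    exact congrFun (Continuous.ext_on (hdense n) (α t n).continuous contR hspan) τ
  -- Conclusion
  intro τ t
  have hint : HasDerivAt (fun u : ℝ => ∫ s in (0:ℝ)..u, α s n (Γ n τ)) (α t n (Γ n τ)) t :=
    intervalIntegral.integral_hasDerivAt_right ((contΓ τ).intervalIntegrable 0 t)
      ((contΓ τ).stronglyMeasurable.stronglyMeasurableAtFilter)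
      (contΓ τ).continuousAt
  have heq : (fun u : ℝ => α u n τ)
      = fun u : ℝ => τ + ∫ s in (0:ℝ)..u, α s n (Γ n τ) := funext fun u => intid u τ
  rw [heq]
  simpa using hint.const_add τ
end

section
/- Let X be a Banach space, 1 ≤ p < ∞, and let A_∞ be the algebra of finite-rank operators on ℓ_p(X) spanned by the elementary operators E_{ij}(x ⊗ x*) (the rank-one operator placing x ⊗ x* in matrix position (i,j)). Fix e ∈ X, e* ∈ X* with e*(e) = 1. Then the linear map s: A_∞ → A_∞ ⊗ A_∞ determined by s(E_{ij}(x ⊗ x*)) = E_{i1}(x ⊗ e*) ⊗ E_{1j}(e ⊗ x*) is a well-defined A_∞-bimodule left inverse of the multiplication map, i.e., μ ∘ s = id and s(ab) = a·s(b) = s(a)·b. -/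
/- STATEMENT 10: For A_∞ = span of the elementary operators E_{ij}(x ⊗ x*) on ℓ_p(X) and a
fixed pair e ∈ X, e* ∈ X* with e*(e) = 1, the assignment
s(E_{ij}(x ⊗ x*)) = E_{i0}(x ⊗ e*) ⊗ E_{0j}(e ⊗ x*) determines a well-defined linear map on
A_∞ which is an A_∞-bimodule left inverse of the multiplication: μ ∘ s = id and
s(ab) = a·s(b) = s(a)·b.  (Coordinates are indexed by ℕ; 0 plays the role of the index 1.) -/

open scoped ENNReal TensorProduct


namespace SplitAux

variable {X : Type*} [NormedAddCommGroup X] [NormedSpace ℂ X]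
variable (p : ℝ≥0∞) [Fact (1 ≤ p)]

local notation "V" => lp (fun _ : ℕ => X) p

lemma hp0 : p ≠ 0 := (zero_lt_one.trans_le (Fact.out : (1:ℝ≥0∞) ≤ p)).ne'

/-- evaluation at coordinate `j` as a continuous linear map -/
noncomputable def lpProj (j : ℕ) : V →L[ℂ] X :=
  LinearMap.mkContinuous
    { toFun := fun ξ => ξ j
      map_add' := fun ξ η => by
        have := congrFun (lp.coeFn_add ξ η) j
        simpa using this
      map_smul' := fun c ξ => by
        have := congrFun (lp.coeFn_smul c ξ) j
        simpa using this }
    1 (fun ξ => by show ‖ξ j‖ ≤ 1 * ‖ξ‖; simpa using lp.norm_apply_le_norm (hp0 p) ξ j)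

@[simp] lemma lpProj_apply (j : ℕ) (ξ : V) : lpProj p j ξ = ξ j := rfl

/-- `v ↦ (ξ ↦ e*(ξ 0) • v)` -/
noncomputable def Hmap (estar : X →L[ℂ] ℂ) : V →ₗ[ℂ] (V →L[ℂ] V) where
  toFun v := (estar.comp (lpProj p 0)).smulRight v
  map_add' v w := by
    ext ξ
    simp [ContinuousLinearMap.smulRight_apply, smul_add]
  map_smul' c v := by
    ext ξ
    simp only [ContinuousLinearMap.smulRight_apply, ContinuousLinearMap.coe_smul',
      Pi.smul_apply, RingHom.id_apply]
    exact smul_comm _ _ _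

@[simp] lemma Hmap_apply (estar : X →L[ℂ] ℂ) (v : V) :
    Hmap p estar v = (estar.comp (lpProj p 0)).smulRight v := rfl

/-- `g ↦ (ξ ↦ g(ξ) • e')` -/
noncomputable def Gmap (e' : V) : (V →L[ℂ] ℂ) →ₗ[ℂ] (V →L[ℂ] V) where
  toFun g := g.smulRight e'
  map_add' g h := by
    ext ξ
    simp [ContinuousLinearMap.smulRight_apply, add_smul]
  map_smul' c g := by
    ext ξ
    simp [ContinuousLinearMap.smulRight_apply, smul_smul]

@[simp] lemma Gmap_apply (e' : V) (g : V →L[ℂ] ℂ) :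
    Gmap p e' g = g.smulRight e' := rfl

noncomputable def kappaBil : (V →L[ℂ] ℂ) →ₗ[ℂ] V →ₗ[ℂ] (V →L[ℂ] V) :=
  LinearMap.mk₂ ℂ (fun g v => g.smulRight v)
    (fun g h v => by ext ξ; simp [ContinuousLinearMap.smulRight_apply, add_smul])
    (fun c g v => by ext ξ; simp [ContinuousLinearMap.smulRight_apply, smul_smul])
    (fun g v w => by ext ξ; simp [ContinuousLinearMap.smulRight_apply, smul_add])
    (fun c g v => by
      ext ξ
      simp only [ContinuousLinearMap.smulRight_apply, ContinuousLinearMap.coe_smul',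
        Pi.smul_apply, RingHom.id_apply]
      exact smul_comm _ _ _)

noncomputable def kappa : ((V →L[ℂ] ℂ) ⊗[ℂ] V) →ₗ[ℂ] (V →L[ℂ] V) :=
  TensorProduct.lift (kappaBil p)

@[simp] lemma kappa_tmul (g : V →L[ℂ] ℂ) (v : V) :
    kappa p (g ⊗ₜ[ℂ] v) = g.smulRight v := rfl

noncomputable def beta (estar : X →L[ℂ] ℂ) (e' : V) :
    ((V →L[ℂ] ℂ) ⊗[ℂ] V) →ₗ[ℂ] ((V →L[ℂ] V) ⊗[ℂ] (V →L[ℂ] V)) :=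
  TensorProduct.lift
    (LinearMap.mk₂ ℂ (fun g v => Hmap p estar v ⊗ₜ[ℂ] Gmap p e' g)
      (fun g h v => by rw [map_add, TensorProduct.tmul_add])
      (fun c g v => by rw [map_smul, TensorProduct.tmul_smul])
      (fun g v w => by rw [map_add, TensorProduct.add_tmul])
      (fun c g v => by rw [map_smul, TensorProduct.smul_tmul']))

@[simp] lemma beta_tmul (estar : X →L[ℂ] ℂ) (e' : V) (g : V →L[ℂ] ℂ) (v : V) :
    beta p estar e' (g ⊗ₜ[ℂ] v) = Hmap p estar v ⊗ₜ[ℂ] Gmap p e' g := rfl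

/-- evaluation at `ξ` as a linear functional on `V →L[ℂ] ℂ` -/
noncomputable def evLM (ξ : V) : (V →L[ℂ] ℂ) →ₗ[ℂ] ℂ where
  toFun g := g ξ
  map_add' g h := rfl
  map_smul' c g := rfl

set_option synthInstance.maxHeartbeats 1000000 in
set_option maxHeartbeats 2000000 in
theorem kappa_injective : Function.Injective (kappa p (X := X)) := by
  classical
  set b := Module.Basis.ofVectorSpace ℂ V with hb
  set e1 := TensorProduct.congr (LinearEquiv.refl ℂ (V →L[ℂ] ℂ)) b.repr with he1
  set e2 := TensorProduct.finsuppScalarRight ℂ ℂ (V →L[ℂ] ℂ) (Module.Basis.ofVectorSpaceIndex ℂ V) with he2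
  have key : ∀ (t : (V →L[ℂ] ℂ) ⊗[ℂ] V) (ξ : V),
      kappa p t ξ = b.repr.symm (Finsupp.mapRange.linearMap (evLM p ξ) (e2 (e1 t))) := by
    intro t ξ
    induction t with
    | zero => simp
    | tmul g v =>
        rw [he1, TensorProduct.congr_tmul]
        have h1 : Finsupp.mapRange.linearMap (evLM p ξ)
            (e2 ((LinearEquiv.refl ℂ (V →L[ℂ] ℂ)) g ⊗ₜ[ℂ] b.repr v)) = g ξ • b.repr v := by
          ext i
          simp [he2, TensorProduct.finsuppScalarRight_apply_tmul_apply, evLM, mul_comm]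
        rw [h1, map_smul, b.repr.symm_apply_apply]
        simp [ContinuousLinearMap.smulRight_apply]
    | add u v ihu ihv =>
        simp only [map_add, ContinuousLinearMap.add_apply, ihu, ihv]
  have hker : ∀ t : (V →L[ℂ] ℂ) ⊗[ℂ] V, kappa p t = 0 → t = 0 := by
    intro t ht
    have h0 : ∀ ξ : V, Finsupp.mapRange.linearMap (evLM p ξ) (e2 (e1 t)) = 0 := by
      intro ξ
      have := key t ξ
      rw [ht] at this
      simp only [ContinuousLinearMap.zero_apply] at this
      have h := this.symm
      rwa [LinearEquiv.map_eq_zero_iff b.repr.symm] at h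
    have hptwise : ∀ i (ξ : V), ((e2 (e1 t)) i) ξ = 0 := by
      intro i ξ
      have h2 := DFunLike.congr_fun (h0 ξ) i
      exact h2
    have hc : e2 (e1 t) = 0 := by
      ext i ξ
      simpa using hptwise i ξ
    have h3 : e1 t = 0 := by rwa [LinearEquiv.map_eq_zero_iff e2] at hc
    rwa [LinearEquiv.map_eq_zero_iff e1] at h3
  intro t1 t2 h12
  have h : kappa p (t1 - t2) = 0 := by rw [map_sub, h12, sub_self]
  exact sub_eq_zero.mp (hker _ h)

end SplitAux

set_option synthInstance.maxHeartbeats 1000000 in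
set_option maxHeartbeats 4000000 in
theorem splitting_of_multiplication_for_elementary_operators
    {X : Type*} [NormedAddCommGroup X] [NormedSpace ℂ X]
    (p : ℝ≥0∞) [Fact (1 ≤ p)] (hp : p ≠ ∞)
    (E : ℕ → ℕ → X → (X →L[ℂ] ℂ) →
      (lp (fun _ : ℕ => X) p →L[ℂ] lp (fun _ : ℕ => X) p))
    (hE : ∀ (i j : ℕ) (x : X) (f : X →L[ℂ] ℂ) (ξ : lp (fun _ : ℕ => X) p) (m : ℕ),
      (E i j x f ξ) m = if m = i then f (ξ j) • x else 0)
    (e : X) (estar : X →L[ℂ] ℂ) (he : estar e = 1) :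
    let B := lp (fun _ : ℕ => X) p →L[ℂ] lp (fun _ : ℕ => X) p
    let Ainf : Submodule ℂ B :=
      Submodule.span ℂ {T : B | ∃ i j x f, T = E i j x f}
    ∃ s : Ainf →ₗ[ℂ] (B ⊗[ℂ] B),
      -- the defining formula on the generators
      (∀ (i j : ℕ) (x : X) (f : X →L[ℂ] ℂ) (h : E i j x f ∈ Ainf),
        s ⟨E i j x f, h⟩ = (E i 0 x estar) ⊗ₜ[ℂ] (E 0 j e f)) ∧
      -- μ ∘ s = id
      (∀ a : Ainf, LinearMap.mul' ℂ B (s a) = (a : B)) ∧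
      -- s is a bimodule homomorphism: s(ab) = s(a)·b = a·s(b)
      (∀ (a b : Ainf) (hab : (a : B) * (b : B) ∈ Ainf),
        s ⟨(a : B) * (b : B), hab⟩ =
          TensorProduct.map (LinearMap.mulLeft ℂ (a : B)) LinearMap.id (s b) ∧
        s ⟨(a : B) * (b : B), hab⟩ =
          TensorProduct.map LinearMap.id (LinearMap.mulRight ℂ (b : B)) (s a)) := by
  intro Bt Ainf
  obtain ⟨ρ, hρ⟩ := LinearMap.exists_leftInverse_of_injective (K := ℂ)
    (V := (lp (fun _ : ℕ => X) p →L[ℂ] ℂ) ⊗[ℂ] lp (fun _ : ℕ => X) p) (V' := Bt)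
    (SplitAux.kappa p (X := X))
    (LinearMap.ker_eq_bot.mpr (SplitAux.kappa_injective p))
  set s : Ainf →ₗ[ℂ] (Bt ⊗[ℂ] Bt) :=
    (SplitAux.beta p estar (lp.single p 0 e)).comp (ρ.comp Ainf.subtype) with hs
  have hρ' : ∀ t, ρ (SplitAux.kappa p t) = t := fun t => by
    have := LinearMap.congr_fun hρ t
    simpa using this
  -- generators as κ of explicit tensors
  have hEκ : ∀ (i j : ℕ) (x : X) (f : X →L[ℂ] ℂ), E i j x f =
      SplitAux.kappa p ((f.comp (SplitAux.lpProj p j)) ⊗ₜ[ℂ] lp.single p i x) := by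
    intro i j x f
    refine ContinuousLinearMap.ext fun ξ => lp.ext (funext fun m => ?_)
    have h1 : (SplitAux.kappa p ((f.comp (SplitAux.lpProj p j)) ⊗ₜ[ℂ] lp.single p i x)) ξ
        = f (ξ j) • lp.single p i x := by
      simp [ContinuousLinearMap.smulRight_apply]
    rw [hE, h1, lp.coeFn_smul, Pi.smul_apply]
    by_cases hm : m = i
    · subst hm; rw [lp.single_apply_self, if_pos rfl]
    · rw [lp.single_apply_ne p i _ hm, if_neg hm, smul_zero]
  have hH : ∀ (i : ℕ) (x : X), SplitAux.Hmap p estar (lp.single p i x) = E i 0 x estar := by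
    intro i x
    refine ContinuousLinearMap.ext fun ξ => lp.ext (funext fun m => ?_)
    have h1 : (SplitAux.Hmap p estar (lp.single p i x)) ξ = estar (ξ 0) • lp.single p i x := by
      simp [ContinuousLinearMap.smulRight_apply]
    rw [hE, h1, lp.coeFn_smul, Pi.smul_apply]
    by_cases hm : m = i
    · subst hm; rw [lp.single_apply_self, if_pos rfl]
    · rw [lp.single_apply_ne p i _ hm, if_neg hm, smul_zero]
  have hG : ∀ (j : ℕ) (f : X →L[ℂ] ℂ),
      SplitAux.Gmap p (lp.single p 0 e) (f.comp (SplitAux.lpProj p j)) = E 0 j e f := by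
    intro j f
    refine ContinuousLinearMap.ext fun ξ => lp.ext (funext fun m => ?_)
    have h1 : (SplitAux.Gmap p (lp.single p 0 e) (f.comp (SplitAux.lpProj p j))) ξ
        = f (ξ j) • lp.single p 0 e := by
      simp [ContinuousLinearMap.smulRight_apply]
    rw [hE, h1, lp.coeFn_smul, Pi.smul_apply]
    by_cases hm : m = 0
    · subst hm; rw [lp.single_apply_self, if_pos rfl]
    · rw [lp.single_apply_ne p 0 _ hm, if_neg hm, smul_zero]
  have hsgen : ∀ (i j : ℕ) (x : X) (f : X →L[ℂ] ℂ) (h : E i j x f ∈ Ainf),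
      s ⟨E i j x f, h⟩ = (E i 0 x estar) ⊗ₜ[ℂ] (E 0 j e f) := by
    intro i j x f h
    have h1 : s ⟨E i j x f, h⟩ = (SplitAux.beta p estar (lp.single p 0 e)) (ρ (E i j x f)) := rfl
    rw [h1, hEκ i j x f, hρ', SplitAux.beta_tmul, hH, hG]
  have genMul : ∀ (i j : ℕ) (x : X) (f : X →L[ℂ] ℂ) (k l : ℕ) (y : X) (g : X →L[ℂ] ℂ),
      E i j x f * E k l y g = E i l ((if j = k then f y else 0) • x) g := by
    intro i j x f k l y g
    refine ContinuousLinearMap.ext fun ξ => lp.ext (funext fun m => ?_)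
    rw [ContinuousLinearMap.mul_apply, hE, hE, hE]
    by_cases hm : m = i
    · by_cases hjk : j = k
      · simp [hm, hjk, smul_smul, mul_comm]
      · simp [hm, hjk]
    · simp [hm]
  have Esmul : ∀ (i j : ℕ) (c : ℂ) (x : X) (f : X →L[ℂ] ℂ),
      E i j (c • x) f = c • E i j x f := by
    intro i j c x f
    refine ContinuousLinearMap.ext fun ξ => lp.ext (funext fun m => ?_)
    have h1 : ((c • E i j x f) ξ) = c • (E i j x f ξ) := rfl
    rw [hE, h1, lp.coeFn_smul, Pi.smul_apply, hE]
    by_cases hm : m = i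
    · rw [if_pos hm, if_pos hm]
      exact smul_comm _ _ _
    · rw [if_neg hm, if_neg hm, smul_zero]
  have memS : ∀ (i j : ℕ) (x : X) (f : X →L[ℂ] ℂ), E i j x f ∈ Ainf :=
    fun i j x f => Submodule.subset_span ⟨i, j, x, f, rfl⟩
  have mulmem : ∀ {a : Bt}, a ∈ Ainf → ∀ {b : Bt}, b ∈ Ainf → a * b ∈ Ainf := by
    intro a ha
    induction ha using Submodule.span_induction with
    | mem t ht =>
        intro b hb
        induction hb using Submodule.span_induction with
        | mem u hu =>
            obtain ⟨i, j, x, f, rfl⟩ := ht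
            obtain ⟨k, l, y, g, rfl⟩ := hu
            rw [genMul]
            exact memS _ _ _ _
        | zero => rw [mul_zero]; exact zero_mem _
        | add u v hu hv ihu ihv => rw [mul_add]; exact add_mem ihu ihv
        | smul c u hu ihu => rw [mul_smul_comm]; exact Submodule.smul_mem _ _ ihu
    | zero => intro b hb; rw [zero_mul]; exact zero_mem _
    | add x y hx hy ihx ihy => intro b hb; rw [add_mul]; exact add_mem (ihx hb) (ihy hb)
    | smul c x hx ihx => intro b hb; rw [smul_mul_assoc]; exact Submodule.smul_mem _ _ (ihx hb)
  have part2 : ∀ a : Ainf, LinearMap.mul' ℂ Bt (s a) = (a : Bt) := by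
    rintro ⟨a, ha⟩
    induction ha using Submodule.span_induction with
    | mem t ht =>
        obtain ⟨i, j, x, f, rfl⟩ := ht
        rw [hsgen, LinearMap.mul'_apply]
        show E i 0 x estar * E 0 j e f = E i j x f
        rw [genMul i 0 x estar 0 j e f]
        simp [he]
    | zero =>
        show LinearMap.mul' ℂ Bt (s 0) = ((0 : Ainf) : Bt)
        rw [map_zero, map_zero]; rfl
    | add x y hx hy ihx ihy =>
        show LinearMap.mul' ℂ Bt (s (⟨x, hx⟩ + ⟨y, hy⟩)) = ((⟨x, hx⟩ + ⟨y, hy⟩ : Ainf) : Bt)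
        rw [map_add, map_add, ihx, ihy]; rfl
    | smul c x hx ihx =>
        show LinearMap.mul' ℂ Bt (s (c • ⟨x, hx⟩)) = ((c • ⟨x, hx⟩ : Ainf) : Bt)
        rw [map_smul, map_smul, ihx]; rfl
  have hL : ∀ (a : Bt) (ha : a ∈ Ainf) (b : Bt) (hb : b ∈ Ainf) (hab : a * b ∈ Ainf),
      s ⟨a * b, hab⟩ = TensorProduct.map (LinearMap.mulLeft ℂ a) LinearMap.id (s ⟨b, hb⟩) := by
    intro a ha
    induction ha using Submodule.span_induction with
    | mem t ht =>
        have htA : t ∈ Ainf := Submodule.subset_span ht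
        intro b hb
        induction hb using Submodule.span_induction with
        | mem u hu =>
            intro hab
            obtain ⟨i, j, x, f, rfl⟩ := ht
            obtain ⟨k, l, y, g, rfl⟩ := hu
            have e1 : (⟨E i j x f * E k l y g, hab⟩ : Ainf)
                = ⟨E i l ((if j = k then f y else 0) • x) g, memS _ _ _ _⟩ :=
              Subtype.ext (genMul i j x f k l y g)
            rw [e1, hsgen, hsgen, TensorProduct.map_tmul]
            simp only [LinearMap.mulLeft_apply, LinearMap.id_coe, id_eq]
            rw [genMul i j x f k 0 y estar]
        | zero =>
            intro hab
            have e1 : (⟨t * 0, hab⟩ : Ainf) = 0 := Subtype.ext (mul_zero t)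
            rw [e1, map_zero]
            show (0 : Bt ⊗[ℂ] Bt) = TensorProduct.map _ _ (s 0)
            rw [map_zero, map_zero]
        | add u v hu hv ihu ihv =>
            intro hab
            have h1 : t * u ∈ Ainf := mulmem htA hu
            have h2 : t * v ∈ Ainf := mulmem htA hv
            have e1 : (⟨t * (u + v), hab⟩ : Ainf) = ⟨t * u, h1⟩ + ⟨t * v, h2⟩ :=
              Subtype.ext (mul_add t u v)
            rw [e1, map_add, ihu h1, ihv h2]
            show _ = TensorProduct.map _ _ (s (⟨u, hu⟩ + ⟨v, hv⟩))
            rw [map_add, map_add]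
        | smul c u hu ihu =>
            intro hab
            have h1 : t * u ∈ Ainf := mulmem htA hu
            have e1 : (⟨t * (c • u), hab⟩ : Ainf) = c • (⟨t * u, h1⟩ : Ainf) :=
              Subtype.ext (mul_smul_comm c t u)
            rw [e1, map_smul, ihu h1]
            show _ = TensorProduct.map _ _ (s (c • (⟨u, hu⟩ : Ainf)))
            rw [map_smul, map_smul]
    | zero =>
        intro b hb hab
        have e1 : (⟨(0 : Bt) * b, hab⟩ : Ainf) = 0 := Subtype.ext (zero_mul b)
        have hmap : TensorProduct.map (LinearMap.mulLeft ℂ (0 : Bt))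
            (LinearMap.id (R := ℂ) (M := Bt)) = 0 := by
          rw [LinearMap.mulLeft_zero_eq_zero]
          exact LinearMap.rTensor_zero Bt
        rw [e1, map_zero, hmap]
        simp
    | add x y hx hy ihx ihy =>
        intro b hb hab
        have h1 : x * b ∈ Ainf := mulmem hx hb
        have h2 : y * b ∈ Ainf := mulmem hy hb
        have e1 : (⟨(x + y) * b, hab⟩ : Ainf) = ⟨x * b, h1⟩ + ⟨y * b, h2⟩ :=
          Subtype.ext (add_mul x y b)
        have hml : LinearMap.mulLeft ℂ (x + y) = LinearMap.mulLeft ℂ x + LinearMap.mulLeft ℂ y :=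
          LinearMap.ext fun z => add_mul x y z
        have hmap : TensorProduct.map (LinearMap.mulLeft ℂ x + LinearMap.mulLeft ℂ y)
            (LinearMap.id (R := ℂ) (M := Bt))
            = TensorProduct.map (LinearMap.mulLeft ℂ x) LinearMap.id
              + TensorProduct.map (LinearMap.mulLeft ℂ y) LinearMap.id :=
          LinearMap.rTensor_add Bt _ _
        rw [e1, map_add, ihx b hb h1, ihy b hb h2, hml, hmap, LinearMap.add_apply]
    | smul c x hx ihx =>
        intro b hb hab
        have h1 : x * b ∈ Ainf := mulmem hx hb
        have e1 : (⟨(c • x) * b, hab⟩ : Ainf) = c • (⟨x * b, h1⟩ : Ainf) :=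
          Subtype.ext (smul_mul_assoc c x b)
        have hml : LinearMap.mulLeft ℂ (c • x) = c • LinearMap.mulLeft ℂ x :=
          LinearMap.ext fun z => smul_mul_assoc c x z
        have hmap : TensorProduct.map (c • LinearMap.mulLeft ℂ x)
            (LinearMap.id (R := ℂ) (M := Bt))
            = c • TensorProduct.map (LinearMap.mulLeft ℂ x) LinearMap.id :=
          LinearMap.rTensor_smul Bt c _
        rw [e1, map_smul, ihx b hb h1, hml, hmap, LinearMap.smul_apply]
  have hR : ∀ (b : Bt) (hb : b ∈ Ainf) (a : Bt) (ha : a ∈ Ainf) (hab : a * b ∈ Ainf),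
      s ⟨a * b, hab⟩ = TensorProduct.map LinearMap.id (LinearMap.mulRight ℂ b) (s ⟨a, ha⟩) := by
    intro b hb
    induction hb using Submodule.span_induction with
    | mem u hu =>
        have huA : u ∈ Ainf := Submodule.subset_span hu
        intro a ha
        induction ha using Submodule.span_induction with
        | mem t ht =>
            intro hab
            obtain ⟨k, l, y, g, rfl⟩ := hu
            obtain ⟨i, j, x, f, rfl⟩ := ht
            have e1 : (⟨E i j x f * E k l y g, hab⟩ : Ainf)
                = ⟨E i l ((if j = k then f y else 0) • x) g, memS _ _ _ _⟩ :=
              Subtype.ext (genMul i j x f k l y g)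
            rw [e1, hsgen, hsgen, TensorProduct.map_tmul]
            simp only [LinearMap.mulRight_apply, LinearMap.id_coe, id_eq]
            rw [genMul 0 j e f k l y g, Esmul i 0 _ x estar, Esmul 0 l _ e g,
              TensorProduct.smul_tmul]
        | zero =>
            intro hab
            have e1 : (⟨(0 : Bt) * u, hab⟩ : Ainf) = 0 := Subtype.ext (zero_mul u)
            rw [e1, map_zero]
            show (0 : Bt ⊗[ℂ] Bt) = TensorProduct.map _ _ (s 0)
            rw [map_zero, map_zero]
        | add x y hx hy ihx ihy =>
            intro hab
            have h1 : x * u ∈ Ainf := mulmem hx huA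
            have h2 : y * u ∈ Ainf := mulmem hy huA
            have e1 : (⟨(x + y) * u, hab⟩ : Ainf) = ⟨x * u, h1⟩ + ⟨y * u, h2⟩ :=
              Subtype.ext (add_mul x y u)
            rw [e1, map_add, ihx h1, ihy h2]
            show _ = TensorProduct.map _ _ (s (⟨x, hx⟩ + ⟨y, hy⟩))
            rw [map_add, map_add]
        | smul c x hx ihx =>
            intro hab
            have h1 : x * u ∈ Ainf := mulmem hx huA
            have e1 : (⟨(c • x) * u, hab⟩ : Ainf) = c • (⟨x * u, h1⟩ : Ainf) :=
              Subtype.ext (smul_mul_assoc c x u)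
            rw [e1, map_smul, ihx h1]
            show _ = TensorProduct.map _ _ (s (c • (⟨x, hx⟩ : Ainf)))
            rw [map_smul, map_smul]
    | zero =>
        intro a ha hab
        have e1 : (⟨a * (0 : Bt), hab⟩ : Ainf) = 0 := Subtype.ext (mul_zero a)
        have hmr : LinearMap.mulRight ℂ (0 : Bt) = 0 :=
          LinearMap.ext fun z => mul_zero z
        have hmap : TensorProduct.map (LinearMap.id (R := ℂ) (M := Bt))
            (LinearMap.mulRight ℂ (0 : Bt)) = 0 := by
          rw [hmr]
          exact LinearMap.lTensor_zero Bt
        rw [e1, map_zero, hmap]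
        simp
    | add u v hu hv ihu ihv =>
        intro a ha hab
        have h1 : a * u ∈ Ainf := mulmem ha hu
        have h2 : a * v ∈ Ainf := mulmem ha hv
        have e1 : (⟨a * (u + v), hab⟩ : Ainf) = ⟨a * u, h1⟩ + ⟨a * v, h2⟩ :=
          Subtype.ext (mul_add a u v)
        have hmr : LinearMap.mulRight ℂ (u + v) = LinearMap.mulRight ℂ u + LinearMap.mulRight ℂ v :=
          LinearMap.ext fun z => mul_add z u v
        have hmap : TensorProduct.map (LinearMap.id (R := ℂ) (M := Bt))
            (LinearMap.mulRight ℂ u + LinearMap.mulRight ℂ v)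
            = TensorProduct.map LinearMap.id (LinearMap.mulRight ℂ u)
              + TensorProduct.map LinearMap.id (LinearMap.mulRight ℂ v) :=
          LinearMap.lTensor_add Bt _ _
        rw [e1, map_add, ihu a ha h1, ihv a ha h2, hmr, hmap, LinearMap.add_apply]
    | smul c u hu ihu =>
        intro a ha hab
        have h1 : a * u ∈ Ainf := mulmem ha hu
        have e1 : (⟨a * (c • u), hab⟩ : Ainf) = c • (⟨a * u, h1⟩ : Ainf) :=
          Subtype.ext (mul_smul_comm c a u)
        have hmr : LinearMap.mulRight ℂ (c • u) = c • LinearMap.mulRight ℂ u :=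
          LinearMap.ext fun z => mul_smul_comm c z u
        have hmap : TensorProduct.map (LinearMap.id (R := ℂ) (M := Bt))
            (c • LinearMap.mulRight ℂ u)
            = c • TensorProduct.map LinearMap.id (LinearMap.mulRight ℂ u) :=
          LinearMap.lTensor_smul Bt c _
        rw [e1, map_smul, ihu a ha h1, hmr, hmap, LinearMap.smul_apply]
  refine ⟨s, hsgen, part2, ?_⟩
  intro a b hab
  exact ⟨hL a a.2 b b.2 hab, hR b b.2 a a.2 hab⟩
end

section
/- Let 𝔄 be a Banach algebra, Cₖ ⊆ Cₖ₊₁ ⊆ ⋯ an increasing family of closed subspaces with dense union A_∞ = ⋃ₖ 𝔄ₖ ∩ A (A a dense subalgebra), and suppose D is a bounded (n+1)-linear functional on 𝔄 with δ-cocycle property, such that there exist κ > 0 and for each k a bounded n-linear functional ψₖ with ‖ψₖ‖ ≤ κ and D(a₀⊗⋯⊗aₙ) = ψₖ(δ(a₀⊗⋯⊗aₙ)) for all a₀,…,aₙ ∈ Aₖ. Define ψ(a₀⊗⋯⊗a_{n−1}) = LIMₖ ψₖ(a₀⊗⋯⊗a_{n−1}) for a₀,…,a_{n−1} ∈ A_∞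 (well-defined since each tuple lies in Aₖ for large k). Then ψ is a bounded n-linear functional with ‖ψ‖ ≤ κ, it extends boundedly to 𝔄, and D = ∂ψ, i.e., D is a bounded Hochschild coboundary. -/
/- STATEMENT 13: If a bounded (n+1)-linear cocycle D on a Banach algebra 𝔄 is generated on
each member Aₖ of an increasing chain of subalgebras with dense union by uniformly bounded
n-linear functionals ψₖ (D = ψₖ ∘ δ on Aₖ), then the Banach-limit ψ = LIMₖ ψₖ gives a
bounded n-linear functional Ψ with ‖Ψ‖ ≤ κ, extending boundedly to 𝔄, and D = ∂Ψ, i.e.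
D is a bounded Hochschild coboundary.  (Here n = m+1 ≥ 1.) -/

open Filter
open scoped ENNReal

def dLast {A : Type*} [Mul A] {n : ℕ} (a : Fin (n + 2) → A) : Fin (n + 1) → A :=
  fun j => if (j : ℕ) = 0 then a (Fin.last (n + 1)) * a 0 else a (Fin.castSucc j)

theorem dFace_continuous {A : Type*} [Mul A] [TopologicalSpace A] [ContinuousMul A]
    {n : ℕ} (i : ℕ) : Continuous (fun a : Fin (n + 2) → A => dFace i a) := by
  refine continuous_pi fun j => ?_
  unfold dFace
  split_ifs <;> continuity

theorem dLast_continuous {A : Type*} [Mul A] [TopologicalSpace A] [ContinuousMul A]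
    {n : ℕ} : Continuous (fun a : Fin (n + 2) → A => dLast a) := by
  refine continuous_pi fun j => ?_
  unfold dLast
  split_ifs <;> continuity

theorem bounded_coboundary_of_uniformly_generated
    {𝔄 : Type*} [NonUnitalNormedRing 𝔄] [NormedSpace ℂ 𝔄]
    [IsScalarTower ℂ 𝔄 𝔄] [SMulCommClass ℂ 𝔄 𝔄] [CompleteSpace 𝔄]
    (m : ℕ)
    -- the increasing chain Aₖ with dense union A_∞
    (Ak : ℕ → NonUnitalSubalgebra ℂ 𝔄)
    (hmono : Monotone fun k => (Ak k : Set 𝔄))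
    (hdense : Dense (⋃ k, (Ak k : Set 𝔄)))
    -- a Banach limit
    (LIM : lp (fun _ : ℕ => ℂ) ∞ →L[ℂ] ℂ)
    (hLIMnorm : ‖LIM‖ = 1)
    (hLIMlim : ∀ (x : lp (fun _ : ℕ => ℂ) ∞) (l : ℂ),
      Tendsto (fun k => x k) atTop (nhds l) → LIM x = l)
    -- D is a bounded (m+2)-linear functional which is a Hochschild cocycle (∂D = 0)
    (D : ContinuousMultilinearMap ℂ (fun _ : Fin (m + 2) => 𝔄) ℂ)
    (hcocycle : ∀ a : Fin (m + 3) → 𝔄,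
      (∑ i ∈ Finset.range (m + 2), ((-1 : ℂ) ^ i) • D (dFace i a))
        + ((-1 : ℂ) ^ (m + 2)) • D (dLast a) = 0)
    -- the uniformly bounded generating functionals ψₖ
    (κ : ℝ) (hκ : 0 < κ)
    (ψ : ℕ → ContinuousMultilinearMap ℂ (fun _ : Fin (m + 1) => 𝔄) ℂ)
    (hψnorm : ∀ k, ‖ψ k‖ ≤ κ)
    -- D = ψₖ ∘ δ on Aₖ
    (hψ : ∀ (k : ℕ) (a : Fin (m + 2) → 𝔄), (∀ i, a i ∈ Ak k) →
      D a = (∑ i ∈ Finset.range (m + 1), ((-1 : ℂ) ^ i) • ψ k (dFace i a))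
        + ((-1 : ℂ) ^ (m + 1)) • ψ k (dLast a)) :
    ∃ Ψ : ContinuousMultilinearMap ℂ (fun _ : Fin (m + 1) => 𝔄) ℂ,
      ‖Ψ‖ ≤ κ ∧
      -- Ψ is given on A_∞ by the Banach limit of the ψₖ
      (∀ a : Fin (m + 1) → 𝔄, (∀ i, a i ∈ ⋃ k, (Ak k : Set 𝔄)) →
        ∀ x : lp (fun _ : ℕ => ℂ) ∞, (∀ k, x k = ψ k a) → Ψ a = LIM x) ∧
      -- D = ∂Ψ is a bounded Hochschild coboundary
      (∀ a : Fin (m + 2) → 𝔄,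
        D a = (∑ i ∈ Finset.range (m + 1), ((-1 : ℂ) ^ i) • Ψ (dFace i a))
          + ((-1 : ℂ) ^ (m + 1)) • Ψ (dLast a)) := by
  classical
  have hκ0 : (0 : ℝ) ≤ κ := hκ.le
  -- the bounded sequence k ↦ ψ k a as an element of ℓ∞
  have hmem : ∀ a : Fin (m + 1) → 𝔄, Memℓp (fun k => ψ k a) ∞ := by
    intro a
    refine memℓp_infty ⟨κ * ∏ i, ‖a i‖, ?_⟩
    rintro r ⟨k, rfl⟩
    exact ((ψ k).le_opNorm a).trans
      (mul_le_mul_of_nonneg_right (hψnorm k) (Finset.prod_nonneg fun _ _ => norm_nonneg _))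
  set x : (Fin (m + 1) → 𝔄) → lp (fun _ : ℕ => ℂ) ∞ := fun a => ⟨fun k => ψ k a, hmem a⟩
    with hxdef
  have hxapp : ∀ (a : Fin (m + 1) → 𝔄) (k : ℕ), (x a) k = ψ k a := fun _ _ => rfl
  -- the multilinear map
  set Ψ₀ : MultilinearMap ℂ (fun _ : Fin (m + 1) => 𝔄) ℂ :=
    { toFun := fun a => LIM (x a)
      map_update_add' := by
        intro _ a i u v
        rw [← map_add]
        refine congrArg LIM (lp.ext (funext fun k => ?_))
        rw [lp.coeFn_add]
        simp only [Pi.add_apply, hxapp]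
        exact (ψ k).map_update_add a i u v
      map_update_smul' := by
        intro _ a i c u
        rw [← map_smul]
        refine congrArg LIM (lp.ext (funext fun k => ?_))
        rw [lp.coeFn_smul]
        simp only [Pi.smul_apply, hxapp]
        exact (ψ k).map_update_smul a i c u } with hΨ₀
  have hΨ₀bound : ∀ a, ‖Ψ₀ a‖ ≤ κ * ∏ i, ‖a i‖ := by
    intro a
    have h1 : ‖LIM (x a)‖ ≤ ‖LIM‖ * ‖x a‖ := LIM.le_opNorm _
    rw [hLIMnorm, one_mul] at h1
    refine h1.trans (lp.norm_le_of_forall_le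
      (mul_nonneg hκ0 (Finset.prod_nonneg fun _ _ => norm_nonneg _)) fun k => ?_)
    rw [hxapp]
    exact ((ψ k).le_opNorm a).trans
      (mul_le_mul_of_nonneg_right (hψnorm k) (Finset.prod_nonneg fun _ _ => norm_nonneg _))
  refine ⟨Ψ₀.mkContinuous κ hΨ₀bound, Ψ₀.mkContinuous_norm_le hκ0 hΨ₀bound, ?_, ?_⟩
  · intro a _ y hy
    have : y = x a := lp.ext (funext fun k => (hy k).trans (hxapp a k).symm)
    rw [this]
    rfl
  · -- D = ∂Ψ
    set Ψ := Ψ₀.mkContinuous κ hΨ₀bound with hΨdef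
    have hΨapp : ∀ a, Ψ a = LIM (x a) := fun _ => rfl
    -- first on the dense subset
    have key : ∀ a : Fin (m + 2) → 𝔄, (∀ i, a i ∈ ⋃ k, (Ak k : Set 𝔄)) →
        D a = (∑ i ∈ Finset.range (m + 1), ((-1 : ℂ) ^ i) • Ψ (dFace i a))
          + ((-1 : ℂ) ^ (m + 1)) • Ψ (dLast a) := by
      intro a ha
      -- common k₀
      have hex : ∀ i, ∃ k, a i ∈ Ak k := by
        intro i
        simpa only [Set.mem_iUnion, SetLike.mem_coe] using ha i
      choose f hf using hex
      obtain ⟨k₀, hk₀⟩ : ∃ k₀, ∀ i, f i ≤ k₀ :=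
        ⟨Finset.univ.sup f, fun i => Finset.le_sup (Finset.mem_univ i)⟩
      have hall : ∀ k ≥ k₀, ∀ i, a i ∈ Ak k := fun k hk i =>
        hmono ((hk₀ i).trans hk) (hf i)
      -- the combined ℓ∞ sequence
      set y : lp (fun _ : ℕ => ℂ) ∞ :=
        (∑ i ∈ Finset.range (m + 1), ((-1 : ℂ) ^ i) • x (dFace i a))
          + ((-1 : ℂ) ^ (m + 1)) • x (dLast a) with hy
      have hyapp : ∀ k, y k =
          (∑ i ∈ Finset.range (m + 1), ((-1 : ℂ) ^ i) • ψ k (dFace i a))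
            + ((-1 : ℂ) ^ (m + 1)) • ψ k (dLast a) := by
        intro k
        rw [hy]
        rw [lp.coeFn_add, Pi.add_apply, lp.coeFn_smul, Pi.smul_apply, hxapp]
        congr 1
        rw [lp.coeFn_sum]
        rw [Finset.sum_apply]
        refine Finset.sum_congr rfl fun i _ => ?_
        rw [lp.coeFn_smul, Pi.smul_apply, hxapp]
      have hRHS : (∑ i ∈ Finset.range (m + 1), ((-1 : ℂ) ^ i) • Ψ (dFace i a))
          + ((-1 : ℂ) ^ (m + 1)) • Ψ (dLast a) = LIM y := by
        rw [hy, map_add, map_smul, map_sum]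
        simp only [map_smul, hΨapp]
      rw [hRHS]
      refine (hLIMlim y (D a) ?_).symm
      refine tendsto_atTop_of_eventually_const (i₀ := k₀) fun k hk => ?_
      rw [hyapp k]
      exact (hψ k a (hall k hk)).symm
    -- extend by continuity
    have hS : Dense {a : Fin (m + 2) → 𝔄 | ∀ i, a i ∈ ⋃ k, (Ak k : Set 𝔄)} := by
      have := dense_pi (s := fun _ : Fin (m + 2) => ⋃ k, (Ak k : Set 𝔄)) Set.univ
        (fun _ _ => hdense)
      simpa [Set.pi, Set.mem_univ] using this
    have hcontD : Continuous fun a : Fin (m + 2) → 𝔄 => D a := D.cont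
    have hcontG : Continuous fun a : Fin (m + 2) → 𝔄 =>
        (∑ i ∈ Finset.range (m + 1), ((-1 : ℂ) ^ i) • Ψ (dFace i a))
          + ((-1 : ℂ) ^ (m + 1)) • Ψ (dLast a) := by
      refine Continuous.add ?_ ?_
      · exact continuous_finset_sum _ fun i _ =>
          (Ψ.cont.comp (dFace_continuous i)).fun_const_smul _
      · exact (Ψ.cont.comp dLast_continuous).fun_const_smul _
    intro a
    have := hcontD.ext_on hS hcontG (fun b hb => key b hb)
    exact congrFun this a
end
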